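/- Every two-sided ideal I of F₀(R) equals F₀((Z × Z) ∩ R) for the R-invariant set Z = {z ∈ X : ∃ f ∈ I, t ∈ G with f(z, h_t(z)) ≠ 0}; that is, ideals of F₀(R) correspond to R-invariant subsets of X. -/

import Mathlib

/-- A partial action `θ = ({X_t}, {h_t})` of a group `G` on a set `X`.
Each `h t` is modelled as a total function `X → X` whose behaviour is only
constrained on the domain `Xt t⁻¹`; the axioms say that `h t` restricts to a
bijection from `Xt t⁻¹` onto `Xt t` (with inverse `h t⁻¹`) and that the usual
partial action axioms hold. -/
structure PartialAction (G X : Type*) [Group G] where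
  /-- the domains `X_t` -/
  Xt : G → Set X
  /-- the partial bijections `h_t`, as total functions -/
  h : G → X → X
  Xt_one : Xt 1 = Set.univ
  h_one : ∀ x, h 1 x = x
  maps_to : ∀ t x, x ∈ Xt t⁻¹ → h t x ∈ Xt t
  h_inv : ∀ t x, x ∈ Xt t⁻¹ → h t⁻¹ (h t x) = x
  image_eq : ∀ t s, h t '' (Xt t⁻¹ ∩ Xt s) = Xt t ∩ Xt (t * s)
  h_comp : ∀ t s x, x ∈ Xt s⁻¹ → x ∈ Xt (s⁻¹ * t⁻¹) → h t (h s x) = h (t * s) x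

variable {G X : Type*} [Group G]

/-- A partial action is free if `h t x = x` for some `x ∈ X_{t⁻¹}` implies `t = e`. -/
def PartialAction.Free (pa : PartialAction G X) : Prop :=
  ∀ t x, x ∈ pa.Xt t⁻¹ → pa.h t x = x → t = 1

/-- The equivalence relation `R` associated to a partial action. -/
def PartialAction.Rel (pa : PartialAction G X) : Set (X × X) :=
  {p | ∃ t, p.1 ∈ pa.Xt t⁻¹ ∧ pa.h t p.1 = p.2}

open Classical

variable {K : Type*} [Field K]

/-- The convolution product on `K`-valued functions on `X × X`:
`(f ∗ g)(x, z) = Σ_{s ∈ G, x ∈ X_{s⁻¹}} f(x, h_s x) · g(h_s x, z)`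
(the sum is a `finsum`, hence well-defined; it is finite for finitely
supported functions on `R` when the action is free). -/
noncomputable def conv (pa : PartialAction G X) (f g : X × X → K) : X × X → K :=
  fun p => ∑ᶠ s ∈ {s : G | p.1 ∈ pa.Xt s⁻¹}, f (p.1, pa.h s p.1) * g (pa.h s p.1, p.2)

/-- Membership in `F₀(R)`: finitely supported functions `X × X → K`
supported on the equivalence relation `R`. -/
def MemF0R (pa : PartialAction G X) (f : X × X → K) : Prop :=
  (Function.support f).Finite ∧ Function.support f ⊆ pa.Rel

/-- The indicator (Dirac delta) function of a point `p ∈ X × X`. -/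
noncomputable def deltaFn (p : X × X) : X × X → K := fun q => if q = p then 1 else 0

/-- A two-sided ideal of the convolution algebra `F₀(R)`: a set of elements of `F₀(R)`
closed under addition and scalar multiplication and absorbing under convolution on
both sides. -/
def IsIdealF0R (pa : PartialAction G X) (I : Set (X × X → K)) : Prop :=
  (∀ f ∈ I, MemF0R pa f) ∧ (0 : X × X → K) ∈ I ∧
    (∀ f ∈ I, ∀ g ∈ I, f + g ∈ I) ∧ (∀ (k : K), ∀ f ∈ I, k • f ∈ I) ∧
    (∀ f ∈ I, ∀ g : X × X → K, MemF0R pa g → conv pa g f ∈ I ∧ conv pa f g ∈ I)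

/-- A subset `Z ⊆ X` is `R`-invariant if `(z, x) ∈ R` with `z ∈ Z` implies `x ∈ Z`. -/
def RInvariant (pa : PartialAction G X) (Z : Set X) : Prop :=
  ∀ z x : X, (z, x) ∈ pa.Rel → z ∈ Z → x ∈ Z

lemma pa_uniq (pa : PartialAction G X) (hfree : pa.Free) {x : X} {s t : G}
    (hs : x ∈ pa.Xt s⁻¹) (ht : x ∈ pa.Xt t⁻¹) (hst : pa.h s x = pa.h t x) : s = t := by
  have hys : pa.h s x ∈ pa.Xt s := pa.maps_to s x hs
  have hyt : pa.h s x ∈ pa.Xt t := hst ▸ pa.maps_to t x ht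
  have hmem : x ∈ pa.Xt (s⁻¹ * t) := by
    have := pa.image_eq s⁻¹ t
    have hx : pa.h s⁻¹ (pa.h s x) ∈ pa.Xt s⁻¹ ∩ pa.Xt (s⁻¹ * t) := by
      rw [← this]
      exact Set.mem_image_of_mem _ ⟨by simpa using hys, hyt⟩
    rw [pa.h_inv s x hs] at hx
    exact hx.2
  have hcomp : pa.h t⁻¹ (pa.h s x) = pa.h (t⁻¹ * s) x :=
    pa.h_comp t⁻¹ s x hs (by simpa using hmem)
  rw [hst, pa.h_inv t x ht] at hcomp
  have hdom : x ∈ pa.Xt (t⁻¹ * s)⁻¹ := by simpa [mul_inv_rev] using hmem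
  have h1 : t⁻¹ * s = 1 := hfree (t⁻¹ * s) x hdom hcomp.symm
  exact (inv_mul_eq_one.mp h1).symm

lemma rel_refl (pa : PartialAction G X) (x : X) : (x, x) ∈ pa.Rel :=
  ⟨1, by simp [pa.Xt_one], pa.h_one x⟩

lemma rel_symm (pa : PartialAction G X) {x y : X} (h : (x, y) ∈ pa.Rel) :
    (y, x) ∈ pa.Rel := by
  obtain ⟨t, h1, h2⟩ := h
  dsimp only at h1 h2
  refine ⟨t⁻¹, ?_, ?_⟩
  · show y ∈ pa.Xt t⁻¹⁻¹
    rw [inv_inv, ← h2]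
    exact pa.maps_to t x h1
  · show pa.h t⁻¹ y = x
    rw [← h2, pa.h_inv t x h1]

lemma rel_trans (pa : PartialAction G X) {a b c : X} (hab : (a, b) ∈ pa.Rel)
    (hbc : (b, c) ∈ pa.Rel) : (a, c) ∈ pa.Rel := by
  obtain ⟨s, hs1, hs2⟩ := hab
  obtain ⟨t, ht1, ht2⟩ := hbc
  dsimp only at hs1 hs2 ht1 ht2
  have hmem : a ∈ pa.Xt (s⁻¹ * t⁻¹) := by
    have := pa.image_eq s⁻¹ t⁻¹
    have hb : b ∈ pa.Xt (s⁻¹)⁻¹ ∩ pa.Xt t⁻¹ :=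
      ⟨by rw [inv_inv, ← hs2]; exact pa.maps_to s a hs1, ht1⟩
    have hx : pa.h s⁻¹ b ∈ pa.Xt s⁻¹ ∩ pa.Xt (s⁻¹ * t⁻¹) := this ▸ Set.mem_image_of_mem _ hb
    have heq : pa.h s⁻¹ b = a := by rw [← hs2, pa.h_inv s a hs1]
    rw [heq] at hx
    exact hx.2
  refine ⟨t * s, by simpa [mul_inv_rev] using hmem, ?_⟩
  show pa.h (t * s) a = c
  rw [← pa.h_comp t s a hs1 hmem, hs2, ht2]

lemma memF0R_delta (pa : PartialAction G X) {p : X × X} (hp : p ∈ pa.Rel) :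
    MemF0R pa (deltaFn p : X × X → K) := by
  have hsub : Function.support (deltaFn p : X × X → K) ⊆ {p} := by
    intro q hq
    by_contra hne
    exact hq (if_neg hne)
  exact ⟨Set.Finite.subset (Set.finite_singleton p) hsub,
    fun q hq => (hsub hq) ▸ hp⟩

lemma convA (pa : PartialAction G X) (hfree : pa.Free) {x y : X}
    (hxy : (x, y) ∈ pa.Rel) (g : X × X → K) (p : X × X) :
    conv pa (deltaFn (x, y)) g p = if p.1 = x then g (y, p.2) else 0 := by
  unfold conv
  rw [finsum_mem_def]
  by_cases hp : p.1 = x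
  · obtain ⟨t, ht1, ht2⟩ := hxy
    dsimp only at ht1 ht2
    rw [finsum_eq_single _ t, if_pos hp]
    · rw [Set.indicator_of_mem (show t ∈ {s' : G | p.1 ∈ pa.Xt s'⁻¹} by show p.1 ∈ pa.Xt t⁻¹; rw [hp]; exact ht1)]
      have : (p.1, pa.h t p.1) = (x, y) := by rw [hp, ht2]
      rw [deltaFn, if_pos this, one_mul, hp, ht2]
    · intro s hs
      by_cases hmem : p.1 ∈ pa.Xt s⁻¹
      · rw [Set.indicator_of_mem (show s ∈ {s' : G | p.1 ∈ pa.Xt s'⁻¹} from hmem)]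
        have hne : (p.1, pa.h s p.1) ≠ (x, y) := by
          intro heq
          apply hs
          rw [hp] at hmem
          have h1 : pa.h s x = y := by rw [← hp]; exact congrArg Prod.snd heq
          exact pa_uniq pa hfree hmem ht1 (by rw [h1, ht2])
        rw [deltaFn]
        simp only [if_neg hne, zero_mul]
      · exact Set.indicator_of_notMem (show s ∉ {s' : G | p.1 ∈ pa.Xt s'⁻¹} from hmem) _
  · rw [if_neg hp]
    apply finsum_eq_zero_of_forall_eq_zero
    intro s
    by_cases hmem : p.1 ∈ pa.Xt s⁻¹
    · rw [Set.indicator_of_mem (show s ∈ {s' : G | p.1 ∈ pa.Xt s'⁻¹} from hmem)]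
      have hne : (p.1, pa.h s p.1) ≠ (x, y) := fun heq => hp (congrArg Prod.fst heq)
      rw [deltaFn]
      simp only [if_neg hne, zero_mul]
    · exact Set.indicator_of_notMem (show s ∉ {s' : G | p.1 ∈ pa.Xt s'⁻¹} from hmem) _

lemma convB (pa : PartialAction G X) (hfree : pa.Free) {y z : X} {f : X × X → K}
    (hf : Function.support f ⊆ pa.Rel) (p : X × X) :
    conv pa f (deltaFn (y, z)) p = if p.2 = z then f (p.1, y) else 0 := by
  unfold conv
  rw [finsum_mem_def]
  by_cases hp : p.2 = z
  · rw [if_pos hp]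
    by_cases hrel : (p.1, y) ∈ pa.Rel
    · obtain ⟨t, ht1, ht2⟩ := hrel
      dsimp only at ht1 ht2
      rw [finsum_eq_single _ t]
      · rw [Set.indicator_of_mem (show t ∈ {s' : G | p.1 ∈ pa.Xt s'⁻¹} from ht1), ht2]
        have : (y, p.2) = (y, z) := by rw [hp]
        rw [deltaFn, if_pos this, mul_one]
      · intro s hs
        by_cases hmem : p.1 ∈ pa.Xt s⁻¹
        · rw [Set.indicator_of_mem (show s ∈ {s' : G | p.1 ∈ pa.Xt s'⁻¹} from hmem)]
          have hne : (pa.h s p.1, p.2) ≠ (y, z) := by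
            intro heq
            apply hs
            have h1 : pa.h s p.1 = y := congrArg Prod.fst heq
            exact pa_uniq pa hfree hmem ht1 (by rw [h1, ht2])
          rw [deltaFn]
          simp only [if_neg hne, mul_zero]
        · exact Set.indicator_of_notMem (show s ∉ {s' : G | p.1 ∈ pa.Xt s'⁻¹} from hmem) _
    · have hz : f (p.1, y) = 0 := by
        by_contra hne
        exact hrel (hf hne)
      rw [hz]
      apply finsum_eq_zero_of_forall_eq_zero
      intro s
      by_cases hmem : p.1 ∈ pa.Xt s⁻¹
      · rw [Set.indicator_of_mem (show s ∈ {s' : G | p.1 ∈ pa.Xt s'⁻¹} from hmem)]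
        by_cases heq : (pa.h s p.1, p.2) = (y, z)
        · exact absurd ⟨s, hmem, congrArg Prod.fst heq⟩ hrel
        · rw [deltaFn]; simp only [if_neg heq, mul_zero]
      · exact Set.indicator_of_notMem (show s ∉ {s' : G | p.1 ∈ pa.Xt s'⁻¹} from hmem) _
  · rw [if_neg hp]
    apply finsum_eq_zero_of_forall_eq_zero
    intro s
    by_cases hmem : p.1 ∈ pa.Xt s⁻¹
    · rw [Set.indicator_of_mem (show s ∈ {s' : G | p.1 ∈ pa.Xt s'⁻¹} from hmem)]
      have hne : (pa.h s p.1, p.2) ≠ (y, z) := fun heq => hp (congrArg Prod.snd heq)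
      rw [deltaFn]; simp only [if_neg hne, mul_zero]
    · exact Set.indicator_of_notMem (show s ∉ {s' : G | p.1 ∈ pa.Xt s'⁻¹} from hmem) _

lemma sum_mem_ideal (pa : PartialAction G X) {I : Set (X × X → K)}
    (hI : IsIdealF0R pa I) (s : Finset (X × X)) :
    ∀ f : X × X → K, MemF0R pa f → ↑(Function.support f) ⊆ (s : Set (X × X)) →
      (∀ p, f p ≠ 0 → deltaFn p ∈ I) → f ∈ I := by
  induction s using Finset.induction_on with
  | empty =>
    intro f hmem hsupp _
    have : f = 0 := by
      funext p
      by_contra hne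
      exact absurd (hsupp hne) (by simp)
    exact this ▸ hI.2.1
  | insert _ _ ha ih =>
    intro f hmem hsupp hdelta
    rename_i a s
    by_cases hfa : f a = 0
    · refine ih f hmem ?_ hdelta
      intro p hp
      have := hsupp hp
      simp only [Finset.coe_insert, Set.mem_insert_iff] at this
      rcases this with h | h
      · exact absurd (h ▸ hp) (by simpa [h] using hfa)
      · exact h
    · set f' : X × X → K := f + (-(f a)) • deltaFn a with hf'
      have hkey : ∀ p, f' p ≠ 0 → f p ≠ 0 ∧ p ≠ a := by
        intro p hp
        by_cases hpa : p = a
        · exfalso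
          apply hp
          simp [hf', deltaFn, hpa]
        · constructor
          · intro h0
            apply hp
            simp [hf', deltaFn, hpa, h0]
          · exact hpa
      have hf'mem : MemF0R pa f' := by
        constructor
        · exact hmem.1.subset (fun p hp => (hkey p hp).1)
        · exact fun p hp => hmem.2 (hkey p hp).1
      have hf'I : f' ∈ I := by
        refine ih f' hf'mem ?_ (fun p hp => hdelta p (hkey p hp).1)
        intro p hp
        have h2 := hsupp (hkey p hp).1
        simp only [Finset.coe_insert, Set.mem_insert_iff] at h2
        rcases h2 with h | h
        · exact absurd h (hkey p hp).2
        · exact h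
      have hdeltaA : (f a) • deltaFn a ∈ I := hI.2.2.2.1 (f a) _ (hdelta a hfa)
      have : f' + (f a) • deltaFn a ∈ I := hI.2.2.1 _ hf'I _ hdeltaA
      have heq : f = f' + (f a) • deltaFn a := by
        funext p
        simp only [hf', Pi.add_apply, Pi.smul_apply, smul_eq_mul]
        ring
      exact heq ▸ this

lemma delta_mem_ideal (pa : PartialAction G X) (hfree : pa.Free)
    {I : Set (X × X → K)} (hI : IsIdealF0R pa I) {x y : X}
    (hx : x ∈ {z : X | ∃ f ∈ I, ∃ u : G, z ∈ pa.Xt u⁻¹ ∧ f (z, pa.h u z) ≠ 0})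
    (hxy : (x, y) ∈ pa.Rel) : (deltaFn (x, y) : X × X → K) ∈ I := by
  obtain ⟨g, hgI, u, hu, hgu⟩ := hx
  set w := pa.h u x with hw
  have hgmem : MemF0R pa g := hI.1 g hgI
  have hxw : (x, w) ∈ pa.Rel := ⟨u, hu, rfl⟩
  have hwx : (w, x) ∈ pa.Rel := rel_symm pa hxw
  have hxx : (x, x) ∈ pa.Rel := rel_refl pa x
  -- h1 = δ_{(x,x)} * g
  set h1 := conv pa (deltaFn (x, x)) g with hh1
  have hh1I : h1 ∈ I := (hI.2.2.2.2 g hgI _ (memF0R_delta pa hxx)).1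
  have hh1eq : ∀ p : X × X, h1 p = if p.1 = x then g (x, p.2) else 0 :=
    fun p => convA pa hfree hxx g p
  have hh1supp : Function.support h1 ⊆ pa.Rel := by
    intro p hp
    rw [Function.mem_support, hh1eq p] at hp
    by_cases hpx : p.1 = x
    · rw [if_pos hpx] at hp
      have : (x, p.2) ∈ pa.Rel := hgmem.2 hp
      rw [← hpx] at this
      exact this
    · exact absurd (if_neg hpx) hp
  -- h2 = h1 * δ_{(w,x)}
  set h2 := conv pa h1 (deltaFn (w, x)) with hh2
  have hh2I : h2 ∈ I := (hI.2.2.2.2 h1 hh1I _ (memF0R_delta pa hwx)).2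
  have hh2eq : ∀ p : X × X, h2 p = g (x, w) * deltaFn (x, x) p := by
    intro p
    rw [hh2, convB pa hfree hh1supp p]
    by_cases hp2 : p.2 = x
    · rw [if_pos hp2, hh1eq]
      by_cases hp1 : p.1 = x
      · rw [if_pos hp1, deltaFn, if_pos (show p = (x, x) from Prod.ext hp1 hp2), mul_one]
      · rw [if_neg hp1, deltaFn, if_neg (fun h => hp1 (congrArg Prod.fst h)), mul_zero]
    · rw [if_neg hp2, deltaFn, if_neg (fun h => hp2 (congrArg Prod.snd h)), mul_zero]
  -- δ_{(x,x)} ∈ I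
  have hdxx : (deltaFn (x, x) : X × X → K) ∈ I := by
    have := hI.2.2.2.1 (g (x, w))⁻¹ h2 hh2I
    have heq : (g (x, w))⁻¹ • h2 = deltaFn (x, x) := by
      funext p
      simp only [Pi.smul_apply, smul_eq_mul, hh2eq p]
      rw [← mul_assoc, inv_mul_cancel₀ (by rw [hw]; exact hgu), one_mul]
    exact heq ▸ this
  -- δ_{(x,y)} = δ_{(x,x)} * δ_{(x,y)}
  have hfinal : conv pa (deltaFn (x, x)) (deltaFn (x, y)) = (deltaFn (x, y) : X × X → K) := by
    funext p
    rw [convA pa hfree hxx (deltaFn (x, y)) p]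
    by_cases hp1 : p.1 = x
    · rw [if_pos hp1]
      congr 1
      exact Prod.ext hp1.symm rfl
    · rw [if_neg hp1, deltaFn, if_neg (fun h => hp1 (congrArg Prod.fst h))]
  have := (hI.2.2.2.2 (deltaFn (x, x)) hdxx (deltaFn (x, y)) (memF0R_delta pa hxy)).2
  exact hfinal ▸ this

/-- Every two-sided ideal `I` of `F₀(R)` (free partial action) equals
`F₀((Z × Z) ∩ R)` for the `R`-invariant set
`Z = {z : ∃ f ∈ I, t ∈ G, f(z, h_t z) ≠ 0}`; so ideals of `F₀(R)` correspond to
`R`-invariant subsets of `X`. -/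
theorem statement17 (pa : PartialAction G X) (hfree : pa.Free)
    (I : Set (X × X → K)) (hI : IsIdealF0R pa I) :
    RInvariant pa {z : X | ∃ f ∈ I, ∃ u : G, z ∈ pa.Xt u⁻¹ ∧ f (z, pa.h u z) ≠ 0} ∧
    I = {f : X × X → K | MemF0R pa f ∧ ∀ p : X × X, f p ≠ 0 →
        p.1 ∈ {z : X | ∃ f ∈ I, ∃ u : G, z ∈ pa.Xt u⁻¹ ∧ f (z, pa.h u z) ≠ 0} ∧
        p.2 ∈ {z : X | ∃ f ∈ I, ∃ u : G, z ∈ pa.Xt u⁻¹ ∧ f (z, pa.h u z) ≠ 0}} := by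
  have hinv : RInvariant pa
      {z : X | ∃ f ∈ I, ∃ u : G, z ∈ pa.Xt u⁻¹ ∧ f (z, pa.h u z) ≠ 0} := by
    intro z x hzx hz
    obtain ⟨f, hfI, u, hu, hfu⟩ := hz
    have hxz : (x, z) ∈ pa.Rel := rel_symm pa hzx
    set g := conv pa (deltaFn (x, z)) f with hg
    have hgI : g ∈ I := (hI.2.2.2.2 f hfI _ (memF0R_delta pa hxz)).1
    have hzw : (z, pa.h u z) ∈ pa.Rel := ⟨u, hu, rfl⟩
    obtain ⟨v, hv1, hv2⟩ := rel_trans pa hxz hzw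
    dsimp only at hv1 hv2
    refine ⟨g, hgI, v, hv1, ?_⟩
    have := convA pa hfree hxz f (x, pa.h v x)
    rw [hg]
    rw [this]
    simp only [if_pos rfl]
    rw [hv2]
    exact hfu
  refine ⟨hinv, ?_⟩
  ext f
  constructor
  · intro hfI
    refine ⟨hI.1 f hfI, ?_⟩
    intro p hp
    have hpR : (p.1, p.2) ∈ pa.Rel := (hI.1 f hfI).2 hp
    obtain ⟨u, hu, hu2⟩ := hpR
    dsimp only at hu hu2
    have hp1 : p.1 ∈ {z : X | ∃ f ∈ I, ∃ u : G, z ∈ pa.Xt u⁻¹ ∧ f (z, pa.h u z) ≠ 0} :=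
      ⟨f, hfI, u, hu, by rw [hu2]; simpa using hp⟩
    exact ⟨hp1, hinv p.1 p.2 ⟨u, hu, hu2⟩ hp1⟩
  · rintro ⟨hfmem, hsupp⟩
    apply sum_mem_ideal pa hI hfmem.1.toFinset f hfmem
    · rw [Set.Finite.coe_toFinset]
    · intro p hp
      exact delta_mem_ideal pa hfree hI (hsupp p hp).1 (hfmem.2 hp)
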